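/- There exist two non-isomorphic connected split graphs G₁ and G₂ on the same vertex set of cardinality 10, both of diameter 3, such that ∂(G₁) = ∂(G₂), |∂(G₁)| = 9, and d_{G₁}(x,y) = d_{G₂}(x,y) for all x, y ∈ ∂(G₁). Hence not every split graph of diameter 3 is a BDM graph. -/

import Mathlib

open SimpleGraph

def gBoundary {V : Type*} (G : SimpleGraph V) : Set V :=
  {v | ∃ u, ∀ w, G.Adj v w → G.dist u w ≤ G.dist u v}

noncomputable def gEcc {V : Type*} [Fintype V] (G : SimpleGraph V) (v : V) : ℕ :=
  Finset.univ.sup fun w => G.dist v w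

noncomputable def gDiam {V : Type*} [Fintype V] (G : SimpleGraph V) : ℕ :=
  Finset.univ.sup fun v => gEcc G v

noncomputable def gRad {V : Type*} [Fintype V] (G : SimpleGraph V) : ℕ :=
  sInf (Set.range fun v => gEcc G v)

def IsBDM {V : Type*} (G : SimpleGraph V) : Prop :=
  ∀ G' : SimpleGraph V, G'.Connected → gBoundary G' = gBoundary G →
    (∀ x ∈ gBoundary G, ∀ y ∈ gBoundary G, G'.dist x y = G.dist x y) →
    Nonempty (G ≃g G')

def IsCutVertex {V : Type*} (G : SimpleGraph V) (v : V) : Prop :=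
  ¬ (G.induce {u | u ≠ v}).Connected

def Chordal {V : Type*} (G : SimpleGraph V) : Prop :=
  ∀ n, 4 ≤ n → IsEmpty (cycleGraph n ↪g G)

def DistHereditary {V : Type*} (G : SimpleGraph V) : Prop :=
  ∀ s : Set V, (G.induce s).Connected →
    ∀ u v : s, (G.induce s).dist u v = G.dist u v

def Ptolemaic {V : Type*} (G : SimpleGraph V) : Prop :=
  Chordal G ∧ DistHereditary G

def IsIntervalGraph {V : Type*} (G : SimpleGraph V) : Prop :=
  ∃ a b : V → ℝ, (∀ v, a v ≤ b v) ∧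
    ∀ u v : V, u ≠ v →
      (G.Adj u v ↔ (Set.Icc (a u) (b u) ∩ Set.Icc (a v) (b v)).Nonempty)

def IsBipartiteGraph {V : Type*} (G : SimpleGraph V) : Prop :=
  ∃ s : Set V, ∀ a b : V, G.Adj a b → ((a ∈ s ∧ b ∉ s) ∨ (a ∉ s ∧ b ∈ s))

def IsSplitGraph {V : Type*} (G : SimpleGraph V) : Prop :=
  ∃ K : Set V, (∀ a ∈ K, ∀ b ∈ K, a ≠ b → G.Adj a b) ∧
    (∀ a ∉ K, ∀ b ∉ K, ¬ G.Adj a b)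

def IsFanCenter {V : Type*} (G : SimpleGraph V) (u : V) : Prop :=
  ∃ x : Fin 4 → V, Function.Injective x ∧ (∀ i, x i ≠ u) ∧
    (∀ i, G.Adj u (x i)) ∧
    (∀ i j : Fin 4, G.Adj (x i) (x j) ↔ (i.val + 1 = j.val ∨ j.val + 1 = i.val))

/-! ### Auxiliary machinery -/

lemma walk_lb {V : Type*} (G : SimpleGraph V) (D : V → V → ℕ)
    (h0 : ∀ u, D u u = 0)
    (htri : ∀ u v w, G.Adj u v → D u w ≤ D v w + 1) :
    ∀ {u v : V} (p : G.Walk u v), D u v ≤ p.length := by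
  intro u v p
  induction p with
  | nil => simpa using (h0 _).le
  | cons h q ih =>
    calc D _ _ ≤ D _ _ + 1 := htri _ _ _ h
    _ ≤ q.length + 1 := by omega

lemma walk_ub {V : Type*} (G : SimpleGraph V) (D : V → V → ℕ)
    (h0 : ∀ u v, D u v = 0 → u = v)
    (hstep : ∀ u v, u ≠ v → ∃ w, G.Adj v w ∧ D u w + 1 = D u v) :
    ∀ (n : ℕ) (u v : V), D u v ≤ n → ∃ p : G.Walk u v, p.length ≤ n := by
  intro n
  induction n with
  | zero => intro u v h; obtain rfl := h0 u v (Nat.le_zero.mp h); exact ⟨.nil, by simp⟩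
  | succ n ih =>
    intro u v h
    by_cases huv : u = v
    · subst huv; exact ⟨.nil, by simp⟩
    · obtain ⟨w, hadj, hw⟩ := hstep u v huv
      obtain ⟨p, hp⟩ := ih u w (by omega)
      exact ⟨p.concat hadj.symm, by rw [SimpleGraph.Walk.length_concat]; omega⟩

lemma cert {V : Type*} [Nonempty V] (G : SimpleGraph V) (D : V → V → ℕ)
    (h0 : ∀ u v, D u v = 0 ↔ u = v)
    (htri : ∀ u v w, G.Adj u v → D u w ≤ D v w + 1)
    (hstep : ∀ u v, u ≠ v → ∃ w, G.Adj v w ∧ D u w + 1 = D u v) :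
    G.Connected ∧ ∀ u v, G.dist u v = D u v := by
  have hub := walk_ub G D (fun u v h => (h0 u v).mp h) hstep
  have hreach : ∀ u v : V, G.Reachable u v := by
    intro u v; obtain ⟨p, -⟩ := hub (D u v) u v le_rfl; exact ⟨p⟩
  refine ⟨⟨hreach⟩, fun u v => le_antisymm ?_ ?_⟩
  · obtain ⟨p, hp⟩ := hub (D u v) u v le_rfl
    exact (G.dist_le p).trans hp
  · obtain ⟨p, hp⟩ := (hreach u v).exists_walk_length_eq_dist
    exact hp ▸ walk_lb G D (fun u => (h0 u u).mpr rfl) htri p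

def mA1 : Fin 10 → Fin 10 → ℕ := ![![0,1,1,1,1,0,0,0,1,1], ![1,0,1,1,1,0,1,0,1,1], ![1,1,0,1,1,1,1,1,0,0], ![1,1,1,0,1,1,0,1,1,0], ![1,1,1,1,0,0,1,0,0,1], ![0,0,1,1,0,0,0,0,0,0], ![0,1,1,0,1,0,0,0,0,0], ![0,0,1,1,0,0,0,0,0,0], ![1,1,0,1,0,0,0,0,0,0], ![1,1,0,0,1,0,0,0,0,0]]
def mA2 : Fin 10 → Fin 10 → ℕ := ![![0,1,1,1,1,0,0,0,1,1], ![1,0,1,1,1,1,1,1,1,0], ![1,1,0,1,1,1,1,1,0,0], ![1,1,1,0,1,1,0,1,1,0], ![1,1,1,1,0,0,1,0,0,1], ![0,1,1,1,0,0,0,0,0,0], ![0,1,1,0,1,0,0,0,0,0], ![0,1,1,1,0,0,0,0,0,0], ![1,1,0,1,0,0,0,0,0,0], ![1,0,0,0,1,0,0,0,0,0]]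
def mD1 : Fin 10 → Fin 10 → ℕ := ![![0,1,1,1,1,2,2,2,1,1], ![1,0,1,1,1,2,1,2,1,1], ![1,1,0,1,1,1,1,1,2,2], ![1,1,1,0,1,1,2,1,1,2], ![1,1,1,1,0,2,1,2,2,1], ![2,2,1,1,2,0,2,2,2,3], ![2,1,1,2,1,2,0,2,2,2], ![2,2,1,1,2,2,2,0,2,3], ![1,1,2,1,2,2,2,2,0,2], ![1,1,2,2,1,3,2,3,2,0]]
def mD2 : Fin 10 → Fin 10 → ℕ := ![![0,1,1,1,1,2,2,2,1,1], ![1,0,1,1,1,1,1,1,1,2], ![1,1,0,1,1,1,1,1,2,2], ![1,1,1,0,1,1,2,1,1,2], ![1,1,1,1,0,2,1,2,2,1], ![2,1,1,1,2,0,2,2,2,3], ![2,1,1,2,1,2,0,2,2,2], ![2,1,1,1,2,2,2,0,2,3], ![1,1,2,1,2,2,2,2,0,2], ![1,2,2,2,1,3,2,3,2,0]]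

def Gr1 : SimpleGraph (Fin 10) where
  Adj i j := mA1 i j = 1
  symm := ⟨by intro i j h; revert i j h; decide⟩
  loopless := ⟨by intro i h; revert i h; decide⟩

def Gr2 : SimpleGraph (Fin 10) where
  Adj i j := mA2 i j = 1
  symm := ⟨by intro i j h; revert i j h; decide⟩
  loopless := ⟨by intro i h; revert i h; decide⟩

instance : DecidableRel Gr1.Adj := fun i j => inferInstanceAs (Decidable (mA1 i j = 1))
instance : DecidableRel Gr2.Adj := fun i j => inferInstanceAs (Decidable (mA2 i j = 1))

def bF : Finset (Fin 10) := {0,2,3,4,5,6,7,8,9}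

lemma cert1 : Gr1.Connected ∧ ∀ u v, Gr1.dist u v = mD1 u v :=
  cert Gr1 mD1 (by decide) (by decide) (by decide)

lemma cert2 : Gr2.Connected ∧ ∀ u v, Gr2.dist u v = mD2 u v :=
  cert Gr2 mD2 (by decide) (by decide) (by decide)

lemma hB1 : gBoundary Gr1 = ↑bF := by
  ext v
  simp only [gBoundary, Set.mem_setOf_eq, cert1.2, Finset.mem_coe]
  revert v; decide

lemma hB2 : gBoundary Gr2 = ↑bF := by
  ext v
  simp only [gBoundary, Set.mem_setOf_eq, cert2.2, Finset.mem_coe]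
  revert v; decide

theorem exists_non_bdm_split_pair_order_ten :
    ∃ G₁ G₂ : SimpleGraph (Fin 10), G₁.Connected ∧ G₂.Connected ∧
      IsSplitGraph G₁ ∧ IsSplitGraph G₂ ∧
      ¬ Nonempty (G₁ ≃g G₂) ∧ gDiam G₁ = 3 ∧ gDiam G₂ = 3 ∧
      gBoundary G₁ = gBoundary G₂ ∧ (gBoundary G₁).ncard = 9 ∧
      ∀ x ∈ gBoundary G₁, ∀ y ∈ gBoundary G₁, G₁.dist x y = G₂.dist x y := by
  refine ⟨Gr1, Gr2, cert1.1, cert2.1, ?_, ?_, ?_, ?_, ?_, ?_, ?_, ?_⟩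
  · exact ⟨{v | v.val < 5}, by decide, by decide⟩
  · exact ⟨{v | v.val < 5}, by decide, by decide⟩
  · rintro ⟨f⟩
    have h := f.card_edgeFinset_eq
    have h1 : Gr1.edgeFinset.card = 23 := by decide
    have h2 : Gr2.edgeFinset.card = 24 := by decide
    omega
  · unfold gDiam gEcc; simp only [cert1.2]; decide
  · unfold gDiam gEcc; simp only [cert2.2]; decide
  · rw [hB1, hB2]
  · rw [hB1, Set.ncard_coe_finset]; decide
  · rw [hB1]
    simp only [Finset.mem_coe, cert1.2, cert2.2]
    decide
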